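/- With the notation of the B–N partition: if x* is any feasible point of {A x = b, x ≥ 0}, x^k is the basic feasible solution associated with basis B^k (so x^k_{N^k} = 0), c̄_{N^k} is the reduced cost vector at B^k, and γ_D^k = max{ -c̄_j : j ∈ N^k, c̄_j < 0 } (taken as the supremum of the negative parts of c̄), then c^T x^k - c^T x* ≤ γ_D^k * ‖x*_{N^k}‖_1. -/

import Mathlib

open Matrix Finset

/-- Lemma 3.1 (Kitahara–Mizuno): the optimality gap of the basic feasible solution `xk`
relative to any feasible `xs` is bounded by `γD` times the ℓ1 norm of the
nonbasic part of `xs`. -/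
theorem kitahara_mizuno_gap_bound (m n : ℕ) (A : Matrix (Fin m) (Fin n) ℝ)
    (b : Fin m → ℝ) (c : Fin n → ℝ) (Bf : Fin m → Fin n) (hBf : Function.Injective Bf)
    (AB : Matrix (Fin m) (Fin m) ℝ) (hABdef : AB = fun i k => A i (Bf k))
    (hAB : IsUnit AB.det)
    (xs : Fin n → ℝ) (hxsfeas : A.mulVec xs = b) (hxsnn : ∀ j, 0 ≤ xs j)
    (xk : Fin n → ℝ) (hxkfeas : A.mulVec xk = b) (hxknn : ∀ j, 0 ≤ xk j)
    (hxkbasic : ∀ j ∈ (Finset.image Bf Finset.univ)ᶜ, xk j = 0)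
    (cbar : Fin n → ℝ)
    (hcbar : ∀ j, cbar j = c j - (fun i => c (Bf i)) ⬝ᵥ AB⁻¹.mulVec (fun i => A i j))
    (γD : ℝ) (hγD0 : 0 ≤ γD)
    (hγD : ∀ j ∈ (Finset.image Bf Finset.univ)ᶜ, cbar j < 0 → -cbar j ≤ γD) :
    c ⬝ᵥ xk - c ⬝ᵥ xs ≤ γD * ∑ j ∈ (Finset.image Bf Finset.univ)ᶜ, |xs j| := by
  set y : Fin m → ℝ := Matrix.vecMul (fun i => c (Bf i)) AB⁻¹ with hy
  have hcbar' : ∀ j, cbar j = c j - ∑ i, y i * A i j := by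
    intro j
    rw [hcbar j, Matrix.dotProduct_mulVec]
    rfl
  have key : ∀ x : Fin n → ℝ, A.mulVec x = b →
      ∑ j, cbar j * x j = c ⬝ᵥ x - y ⬝ᵥ b := by
    intro x hx
    rw [← hx]
    simp only [hcbar', sub_mul, Finset.sum_sub_distrib, dotProduct,
      Matrix.mulVec, Finset.sum_mul, Finset.mul_sum]
    congr 1
    rw [Finset.sum_comm]
    congr 1; ext i; congr 1; ext j; ring
  have hdiff : c ⬝ᵥ xk - c ⬝ᵥ xs = ∑ j, cbar j * (xk j - xs j) := by
    have := key xk hxkfeas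
    have := key xs hxsfeas
    simp only [mul_sub, Finset.sum_sub_distrib]
    rw [key xk hxkfeas, key xs hxsfeas]; ring
  have hbasic : ∀ k : Fin m, cbar (Bf k) = 0 := by
    intro k
    have hcol : (fun i => A i (Bf k)) = AB.mulVec (Pi.single k 1) := by
      ext i
      simp [hABdef, Matrix.mulVec, dotProduct, Pi.single_apply]
    rw [hcbar (Bf k), hcol, Matrix.mulVec_mulVec, Matrix.nonsing_inv_mul AB hAB,
      Matrix.one_mulVec]
    simp [dotProduct_single]
  rw [hdiff, ← Finset.sum_add_sum_compl (Finset.image Bf Finset.univ)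
      (fun j => cbar j * (xk j - xs j))]
  have h1 : ∑ j ∈ Finset.image Bf Finset.univ, cbar j * (xk j - xs j) = 0 := by
    apply Finset.sum_eq_zero
    intro j hj
    obtain ⟨k, _, rfl⟩ := Finset.mem_image.mp hj
    rw [hbasic k, zero_mul]
  rw [h1, zero_add, Finset.mul_sum]
  apply Finset.sum_le_sum
  intro j hj
  rw [hxkbasic j hj]
  rcases lt_or_ge (cbar j) 0 with h | h
  · have h2 := hγD j hj h
    have h3 := hxsnn j
    rw [abs_of_nonneg h3]
    nlinarith
  · have h3 := hxsnn j
    have : cbar j * (0 - xs j) ≤ 0 := by nlinarith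
    exact this.trans (mul_nonneg hγD0 (abs_nonneg _))
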